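/- Let α > 0 and λ₁ ≥ C_α λ₂ > 0, and consider φ(r) = φ_λ^+(r) = λ₁ r + λ₂(1 − r^α)^{2/α} on (0,1). (i) If α ≥ 2, then φ' is decreasing on (0,1) and there exists r* ∈ [0,1] such that φ'(r) ≥ λ₁/2 for all r ∈ (0, r*) and |φ''(r)| ≥ λ₁/2 for all r ∈ (r*, 1). (ii) If 0 < α ≤ 1, then φ' is increasing on (0,1) and there exists r* ∈ [0,1] such that φ'(r) ≥ λ₁/2 for all r ∈ (r*, 1) and |φ''(r)| ≥ λ₁/2 for all r ∈ (0, r*). (iii) If 1 < α < 2, then, with r₀ = (α−1)^{1/α}, φ' is decreasing on (0, r₀) and increasing on (r₀, 1), and there exist points r₀' and r₀'' with 0 < r₀' < r₀ < r₀'' < 1 and a constant D_α > 0, all depending only on α, such that φ'(r) ≥ D_α λ₁ for all r ∈ (0, r₀') ∪ (r₀'', 1), and inf_{r ∈ [r₀', r₀'']} φ'(r) + inf_{r ∈ [r₀', r₀'']} |φ'''(r)| ≥ D_α λ₁. -/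

import Mathlib

open Set

/-- The constant `C_α`. -/
noncomputable def Calpha (α : ℝ) : ℝ :=
  if 1 < α ∧ α < 2 then 2 * (2 - α) ^ (2 / α - 1) * (α - 1) ^ (1 - 1 / α) else 2

/-- The phase `φ_λ⁺(r) = l₁ r + l₂ (1 - r^α)^{2/α}`. -/
noncomputable def phasePlus (α l₁ l₂ r : ℝ) : ℝ :=
  l₁ * r + l₂ * (1 - r ^ α) ^ (2 / α)


noncomputable def g1 (α r : ℝ) : ℝ := r ^ (α - 1) * (1 - r ^ α) ^ (2/α - 1)
noncomputable def g2 (α r : ℝ) : ℝ := r ^ (α - 2) * (1 - r ^ α) ^ (2/α - 2) * (α - 1 - r ^ α)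

lemma upos {α r : ℝ} (hα : 0 < α) (hr : r ∈ Ioo (0:ℝ) 1) : 0 < 1 - r ^ α := by
  have : r ^ α < 1 := Real.rpow_lt_one (le_of_lt hr.1) hr.2 hα
  linarith

lemma hd_phase {α l₁ l₂ r : ℝ} (hα : 0 < α) (hr : r ∈ Ioo (0:ℝ) 1) :
    HasDerivAt (phasePlus α l₁ l₂) (l₁ - 2 * l₂ * g1 α r) r := by
  have hr0 : (0:ℝ) < r := hr.1
  have hu : 0 < 1 - r ^ α := upos hα hr
  have h1 : HasDerivAt (fun r : ℝ => r ^ α) (α * r ^ (α - 1)) r :=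
    Real.hasDerivAt_rpow_const (Or.inl (ne_of_gt hr0))
  have h2 : HasDerivAt (fun r : ℝ => 1 - r ^ α) (-(α * r ^ (α - 1))) r := by
    exact h1.const_sub 1
  have h3 : HasDerivAt (fun r : ℝ => (1 - r ^ α) ^ (2/α))
      (-(α * r ^ (α - 1)) * (2/α) * (1 - r ^ α) ^ (2/α - 1)) r :=
    h2.rpow_const (Or.inl (ne_of_gt hu))
  have h4 : HasDerivAt (phasePlus α l₁ l₂)
      (l₁ * 1 + l₂ * (-(α * r ^ (α - 1)) * (2/α) * (1 - r ^ α) ^ (2/α - 1))) r := by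
    exact ((hasDerivAt_id r).const_mul l₁).add (h3.const_mul l₂)
  convert h4 using 1
  unfold g1
  field_simp
  ring

noncomputable def g3 (α r : ℝ) : ℝ := r ^ (α - 3) * (1 - r ^ α) ^ (2/α - 3) *
  ((α-2) * (1 - r^α) * (α-1-r^α) + 2*(α-1) * (r^α) * (α-1-r^α) - α * (r^α) * (1-r^α))

lemma hd_g1 {α r : ℝ} (hα : 0 < α) (hr : r ∈ Ioo (0:ℝ) 1) :
    HasDerivAt (g1 α) (g2 α r) r := by
  have hr0 : (0:ℝ) < r := hr.1
  have hu : 0 < 1 - r ^ α := upos hα hr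
  have h1 : HasDerivAt (fun r : ℝ => r ^ α) (α * r ^ (α - 1)) r :=
    Real.hasDerivAt_rpow_const (Or.inl (ne_of_gt hr0))
  have h2 : HasDerivAt (fun r : ℝ => 1 - r ^ α) (-(α * r ^ (α - 1))) r := by
    exact h1.const_sub 1
  have ha : HasDerivAt (fun r : ℝ => r ^ (α - 1)) ((α-1) * r ^ (α - 1 - 1)) r :=
    Real.hasDerivAt_rpow_const (Or.inl (ne_of_gt hr0))
  have hb : HasDerivAt (fun r : ℝ => (1 - r ^ α) ^ (2/α - 1))
      (-(α * r ^ (α - 1)) * (2/α - 1) * (1 - r ^ α) ^ (2/α - 1 - 1)) r :=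
    h2.rpow_const (Or.inl (ne_of_gt hu))
  have h := ha.mul hb
  refine h.congr_deriv ?_
  have k1 : r ^ (α-1) = r^α / r := by
    rw [Real.rpow_sub hr0, Real.rpow_one]
  have k2 : r ^ (α-1-1) = r^α / r / r := by
    rw [Real.rpow_sub hr0, Real.rpow_sub hr0, Real.rpow_one]
  have k2' : r ^ (α-2) = r^α / r / r := by
    rw [show α-2 = α-1-1 by ring]; exact k2
  have k3 : (1 - r^α) ^ (2/α-1) = (1-r^α)^(2/α) / (1-r^α) := by
    rw [Real.rpow_sub hu, Real.rpow_one]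
  have k4 : (1 - r^α) ^ (2/α-1-1) = (1-r^α)^(2/α) / (1-r^α) / (1-r^α) := by
    rw [Real.rpow_sub hu, Real.rpow_sub hu, Real.rpow_one]
  have k4' : (1 - r^α) ^ (2/α-2) = (1-r^α)^(2/α) / (1-r^α) / (1-r^α) := by
    rw [show 2/α-2 = 2/α-1-1 by ring]; exact k4
  unfold g2
  rw [k1, k2, k2', k3, k4, k4']
  field_simp
  ring

lemma hd_g2 {α r : ℝ} (hα : 0 < α) (hr : r ∈ Ioo (0:ℝ) 1) :
    HasDerivAt (g2 α) (g3 α r) r := by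
  have hr0 : (0:ℝ) < r := hr.1
  have hu : 0 < 1 - r ^ α := upos hα hr
  have h1 : HasDerivAt (fun r : ℝ => r ^ α) (α * r ^ (α - 1)) r :=
    Real.hasDerivAt_rpow_const (Or.inl (ne_of_gt hr0))
  have h2 : HasDerivAt (fun r : ℝ => 1 - r ^ α) (-(α * r ^ (α - 1))) r := by
    exact h1.const_sub 1
  have ha : HasDerivAt (fun r : ℝ => r ^ (α - 2)) ((α-2) * r ^ (α - 2 - 1)) r :=
    Real.hasDerivAt_rpow_const (Or.inl (ne_of_gt hr0))
  have hb : HasDerivAt (fun r : ℝ => (1 - r ^ α) ^ (2/α - 2))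
      (-(α * r ^ (α - 1)) * (2/α - 2) * (1 - r ^ α) ^ (2/α - 2 - 1)) r :=
    h2.rpow_const (Or.inl (ne_of_gt hu))
  have hc : HasDerivAt (fun r : ℝ => α - 1 - r ^ α) (-(α * r ^ (α - 1))) r := by
    exact h1.const_sub (α-1)
  have h := (ha.mul hb).mul hc
  simp only [Pi.mul_apply] at h
  refine h.congr_deriv ?_
  have k1 : r ^ (α-1) = r^α / r := by
    rw [Real.rpow_sub hr0, Real.rpow_one]
  have k2 : r ^ (α-2) = r^α / r / r := by
    rw [show α-2 = α-1-1 by ring, Real.rpow_sub hr0, Real.rpow_sub hr0, Real.rpow_one]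
  have k2' : r ^ (α-2-1) = r^α / r / r / r := by
    rw [show α-2-1 = α-1-1-1 by ring, Real.rpow_sub hr0, Real.rpow_sub hr0,
      Real.rpow_sub hr0, Real.rpow_one]
  have k2'' : r ^ (α-3) = r^α / r / r / r := by
    rw [show α-3 = α-2-1 by ring]; exact k2'
  have k3 : (1 - r^α) ^ (2/α-2) = (1-r^α)^(2/α) / (1-r^α) / (1-r^α) := by
    rw [show 2/α-2 = 2/α-1-1 by ring, Real.rpow_sub hu, Real.rpow_sub hu, Real.rpow_one]
  have k3' : (1 - r^α) ^ (2/α-2-1) = (1-r^α)^(2/α) / (1-r^α) / (1-r^α) / (1-r^α) := by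
    rw [show 2/α-2-1 = 2/α-1-1-1 by ring, Real.rpow_sub hu, Real.rpow_sub hu,
      Real.rpow_sub hu, Real.rpow_one]
  have k3'' : (1 - r^α) ^ (2/α-3) = (1-r^α)^(2/α) / (1-r^α) / (1-r^α) / (1-r^α) := by
    rw [show 2/α-3 = 2/α-2-1 by ring]; exact k3'
  unfold g3
  rw [k1, k2, k2', k2'', k3, k3', k3'']
  field_simp
  ring

lemma derivP {α l₁ l₂ r : ℝ} (hα : 0 < α) (hr : r ∈ Ioo (0:ℝ) 1) :
    deriv (phasePlus α l₁ l₂) r = l₁ - 2 * l₂ * g1 α r := (hd_phase hα hr).deriv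

lemma deriv2P {α l₁ l₂ r : ℝ} (hα : 0 < α) (hr : r ∈ Ioo (0:ℝ) 1) :
    deriv (deriv (phasePlus α l₁ l₂)) r = -(2 * l₂) * g2 α r := by
  have hev : deriv (phasePlus α l₁ l₂) =ᶠ[nhds r] fun s => l₁ - 2 * l₂ * g1 α s := by
    filter_upwards [isOpen_Ioo.mem_nhds hr] with s hs using derivP hα hs
  rw [hev.deriv_eq]
  have h := (((hd_g1 hα hr).const_mul (2 * l₂)).const_sub l₁).deriv
  rw [h]; ring

lemma deriv3P {α l₁ l₂ r : ℝ} (hα : 0 < α) (hr : r ∈ Ioo (0:ℝ) 1) :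
    deriv (deriv (deriv (phasePlus α l₁ l₂))) r = -(2 * l₂) * g3 α r := by
  have hev : deriv (deriv (phasePlus α l₁ l₂)) =ᶠ[nhds r] fun s => -(2 * l₂) * g2 α s := by
    filter_upwards [isOpen_Ioo.mem_nhds hr] with s hs using deriv2P hα hs
  rw [hev.deriv_eq]
  exact ((hd_g2 hα hr).const_mul (-(2 * l₂))).deriv

lemma g1_pos {α r : ℝ} (hα : 0 < α) (hr : r ∈ Ioo (0:ℝ) 1) : 0 < g1 α r := by
  have hu := upos hα hr
  exact mul_pos (Real.rpow_pos_of_pos hr.1 _) (Real.rpow_pos_of_pos hu _)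

lemma g1_mono {α : ℝ} (hα : 0 < α) {s : Set ℝ} (hconv : Convex ℝ s) (hsub : s ⊆ Ioo 0 1)
    (hpos : ∀ x ∈ interior s, 0 < g2 α x) : StrictMonoOn (g1 α) s := by
  apply strictMonoOn_of_deriv_pos hconv
  · exact fun x hx => ((hd_g1 hα (hsub hx)).differentiableAt.continuousAt).continuousWithinAt
  · intro x hx
    rw [(hd_g1 hα (hsub (interior_subset hx))).deriv]
    exact hpos x hx

lemma g1_anti {α : ℝ} (hα : 0 < α) {s : Set ℝ} (hconv : Convex ℝ s) (hsub : s ⊆ Ioo 0 1)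
    (hneg : ∀ x ∈ interior s, g2 α x < 0) : StrictAntiOn (g1 α) s := by
  apply strictAntiOn_of_deriv_neg hconv
  · exact fun x hx => ((hd_g1 hα (hsub hx)).differentiableAt.continuousAt).continuousWithinAt
  · intro x hx
    rw [(hd_g1 hα (hsub (interior_subset hx))).deriv]
    exact hneg x hx

-- key pointwise inequalities
lemma g1_eq_alt {α r : ℝ} (hα : 0 < α) (hr : r ∈ Ioo (0:ℝ) 1) :
    g1 α r = r ^ (α-2) * (1 - r^α) ^ (2/α - 2) * (r * (1 - r^α)) := by
  have hr0 : (0:ℝ) < r := hr.1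
  have hu := upos hα hr
  have k1 : r ^ (α-1) = r^α / r := by rw [Real.rpow_sub hr0, Real.rpow_one]
  have k2 : r ^ (α-2) = r^α / r / r := by
    rw [show α-2 = α-1-1 by ring, Real.rpow_sub hr0, Real.rpow_sub hr0, Real.rpow_one]
  have k3 : (1 - r^α) ^ (2/α-1) = (1-r^α)^(2/α) / (1-r^α) := by
    rw [Real.rpow_sub hu, Real.rpow_one]
  have k4 : (1 - r^α) ^ (2/α-2) = (1-r^α)^(2/α) / (1-r^α) / (1-r^α) := by
    rw [show 2/α-2 = 2/α-1-1 by ring, Real.rpow_sub hu, Real.rpow_sub hu, Real.rpow_one]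
  unfold g1
  rw [k1, k2, k3, k4]
  field_simp

lemma AB_pos {α r : ℝ} (hα : 0 < α) (hr : r ∈ Ioo (0:ℝ) 1) :
    0 < r ^ (α-2) * (1 - r^α) ^ (2/α - 2) :=
  mul_pos (Real.rpow_pos_of_pos hr.1 _) (Real.rpow_pos_of_pos (upos hα hr) _)

lemma key_i {α r : ℝ} (hα2 : 2 ≤ α) (hr : r ∈ Ioo (0:ℝ) 1) : g1 α r ≤ g2 α r := by
  have hα : (0:ℝ) < α := by linarith
  have hAB := AB_pos hα hr
  have hu := upos hα hr
  rw [g1_eq_alt hα hr]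
  unfold g2
  have hbr : r * (1 - r^α) ≤ α - 1 - r^α := by nlinarith [hr.1, hr.2]
  nlinarith [hAB, hbr]

lemma key_ii {α r : ℝ} (hα : 0 < α) (hα1 : α ≤ 1) (hr : r ∈ Ioo (0:ℝ) 1) :
    g1 α r ≤ -(g2 α r) := by
  have hAB := AB_pos hα hr
  have hu := upos hα hr
  rw [g1_eq_alt hα hr]
  unfold g2
  have hra : r ≤ r ^ α := by
    have := Real.rpow_le_rpow_of_exponent_ge hr.1 hr.2.le hα1
    simpa using this
  have hbr : r * (1 - r^α) ≤ -(α - 1 - r^α) := by nlinarith [hr.1, hr.2]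
  nlinarith [hAB, hbr]

lemma part_i {α l₁ l₂ : ℝ} (hα : 0 < α) (hl₂ : 0 < l₂) (hα2 : 2 ≤ α) :
    StrictAntiOn (deriv (phasePlus α l₁ l₂)) (Ioo 0 1) ∧
      ∃ rs ∈ Icc (0 : ℝ) 1,
        (∀ r ∈ Ioo 0 rs, l₁ / 2 ≤ deriv (phasePlus α l₁ l₂) r) ∧
        (∀ r ∈ Ioo rs 1, l₁ / 2 ≤ |deriv (deriv (phasePlus α l₁ l₂)) r|) := by
  have hg2pos : ∀ x ∈ Ioo (0:ℝ) 1, 0 < g2 α x := by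
    intro x hx
    have h1 : x ^ α < 1 := Real.rpow_lt_one hx.1.le hx.2 hα
    exact mul_pos (AB_pos hα hx) (by linarith)
  have hmono : StrictMonoOn (g1 α) (Ioo 0 1) :=
    g1_mono hα (convex_Ioo 0 1) subset_rfl (fun x hx => hg2pos x (by rwa [interior_Ioo] at hx))
  constructor
  · intro x hx y hy hxy
    rw [derivP hα hx, derivP hα hy]
    have := hmono hx hy hxy
    nlinarith
  · set S : Set ℝ := {x | x ∈ Icc (0:ℝ) 1 ∧ ∀ s ∈ Ioo (0:ℝ) x, l₁/2 ≤ deriv (phasePlus α l₁ l₂) s}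
      with hS
    have h0 : (0:ℝ) ∈ S := ⟨⟨le_refl _, zero_le_one⟩, fun s hs => absurd hs.2 (not_lt.2 hs.1.le)⟩
    have hbdd : BddAbove S := ⟨1, fun x hx => hx.1.2⟩
    refine ⟨sSup S, ⟨le_csSup hbdd h0, csSup_le ⟨0, h0⟩ (fun x hx => hx.1.2)⟩, ?_, ?_⟩
    · intro r hr
      obtain ⟨s, hsS, hrs⟩ := exists_lt_of_lt_csSup ⟨0, h0⟩ hr.2
      exact hsS.2 r ⟨hr.1, hrs⟩
    · intro r hr
      have hrs0 : (0:ℝ) ≤ sSup S := le_csSup hbdd h0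
      have hr01 : r ∈ Ioo (0:ℝ) 1 := ⟨lt_of_le_of_lt hrs0 hr.1, hr.2⟩
      have hnot : r ∉ S := fun hmem => absurd (le_csSup hbdd hmem) (not_le.2 hr.1)
      have hex : ∃ s ∈ Ioo (0:ℝ) r, deriv (phasePlus α l₁ l₂) s < l₁/2 := by
        by_contra hcon
        push_neg at hcon
        exact hnot ⟨⟨hr01.1.le, hr01.2.le⟩, hcon⟩
      obtain ⟨s, hs, hds⟩ := hex
      have hs01 : s ∈ Ioo (0:ℝ) 1 := ⟨hs.1, hs.2.trans hr01.2⟩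
      rw [derivP hα hs01] at hds
      have h2 : g1 α s < g1 α r := hmono hs01 hr01 hs.2
      have h3 := key_i hα2 hr01
      have hg2 : 0 < g2 α r := hg2pos r hr01
      rw [deriv2P hα hr01, abs_of_nonpos (by nlinarith)]
      nlinarith

lemma part_ii {α l₁ l₂ : ℝ} (hα : 0 < α) (hl₂ : 0 < l₂) (hα1 : α ≤ 1) :
    StrictMonoOn (deriv (phasePlus α l₁ l₂)) (Ioo 0 1) ∧
      ∃ rs ∈ Icc (0 : ℝ) 1,
        (∀ r ∈ Ioo rs 1, l₁ / 2 ≤ deriv (phasePlus α l₁ l₂) r) ∧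
        (∀ r ∈ Ioo 0 rs, l₁ / 2 ≤ |deriv (deriv (phasePlus α l₁ l₂)) r|) := by
  have hg2neg : ∀ x ∈ Ioo (0:ℝ) 1, g2 α x < 0 := by
    intro x hx
    have h1 : 0 < x ^ α := Real.rpow_pos_of_pos hx.1 _
    exact mul_neg_of_pos_of_neg (AB_pos hα hx) (by linarith)
  have hanti : StrictAntiOn (g1 α) (Ioo 0 1) :=
    g1_anti hα (convex_Ioo 0 1) subset_rfl (fun x hx => hg2neg x (by rwa [interior_Ioo] at hx))
  constructor
  · intro x hx y hy hxy
    rw [derivP hα hx, derivP hα hy]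
    have := hanti hx hy hxy
    nlinarith
  · set S : Set ℝ := {x | x ∈ Icc (0:ℝ) 1 ∧ ∀ s ∈ Ioo x 1, l₁/2 ≤ deriv (phasePlus α l₁ l₂) s}
      with hS
    have h1S : (1:ℝ) ∈ S := ⟨⟨zero_le_one, le_refl _⟩, fun s hs => absurd hs.1 (not_lt.2 hs.2.le)⟩
    have hbdd : BddBelow S := ⟨0, fun x hx => hx.1.1⟩
    refine ⟨sInf S, ⟨le_csInf ⟨1, h1S⟩ (fun x hx => hx.1.1), csInf_le hbdd h1S⟩, ?_, ?_⟩
    · intro r hr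
      obtain ⟨s, hsS, hrs⟩ := exists_lt_of_csInf_lt ⟨1, h1S⟩ hr.1
      exact hsS.2 r ⟨hrs, hr.2⟩
    · intro r hr
      have hrs1 : sInf S ≤ 1 := csInf_le hbdd h1S
      have hr01 : r ∈ Ioo (0:ℝ) 1 := ⟨hr.1, lt_of_lt_of_le hr.2 hrs1⟩
      have hnot : r ∉ S := fun hmem => absurd (csInf_le hbdd hmem) (not_le.2 hr.2)
      have hex : ∃ s ∈ Ioo r 1, deriv (phasePlus α l₁ l₂) s < l₁/2 := by
        by_contra hcon
        push_neg at hcon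
        exact hnot ⟨⟨hr01.1.le, hr01.2.le⟩, hcon⟩
      obtain ⟨s, hs, hds⟩ := hex
      have hs01 : s ∈ Ioo (0:ℝ) 1 := ⟨hr01.1.trans hs.1, hs.2⟩
      rw [derivP hα hs01] at hds
      have h2 : g1 α s < g1 α r := hanti hr01 hs01 hs.1
      have h3 := key_ii hα hα1 hr01
      have hg2 : g2 α r < 0 := hg2neg r hr01
      rw [deriv2P hα hr01, abs_of_nonneg (by nlinarith)]
      nlinarith

set_option maxHeartbeats 2000000 in
lemma part_iii {α : ℝ} (h1 : 1 < α) (h2 : α < 2) :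
    ∃ r₀' r₀'' D : ℝ, 0 < r₀' ∧ r₀' < (α - 1) ^ (1 / α) ∧
      (α - 1) ^ (1 / α) < r₀'' ∧ r₀'' < 1 ∧ 0 < D ∧
      ∀ l₁ l₂ : ℝ, 0 < l₂ → Calpha α * l₂ ≤ l₁ →
        StrictAntiOn (deriv (phasePlus α l₁ l₂)) (Ioo 0 ((α - 1) ^ (1 / α))) ∧
        StrictMonoOn (deriv (phasePlus α l₁ l₂)) (Ioo ((α - 1) ^ (1 / α)) 1) ∧
        (∀ r ∈ Ioo 0 r₀' ∪ Ioo r₀'' 1, D * l₁ ≤ deriv (phasePlus α l₁ l₂) r) ∧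
        D * l₁ ≤ sInf (deriv (phasePlus α l₁ l₂) '' Icc r₀' r₀'') +
          sInf ((fun r => |deriv (deriv (deriv (phasePlus α l₁ l₂))) r|) '' Icc r₀' r₀'') := by
  have hα : (0:ℝ) < α := by linarith
  set r₀ : ℝ := (α - 1) ^ (1 / α) with hr₀def
  have ha1 : (0:ℝ) < α - 1 := by linarith
  have hr₀pos : 0 < r₀ := Real.rpow_pos_of_pos ha1 _
  have hr₀lt : r₀ < 1 := Real.rpow_lt_one ha1.le (by linarith) (by positivity)
  have hr₀ : r₀ ∈ Ioo (0:ℝ) 1 := ⟨hr₀pos, hr₀lt⟩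
  have e1 : r₀ ^ α = α - 1 := by
    rw [hr₀def, ← Real.rpow_mul ha1.le, one_div_mul_cancel hα.ne', Real.rpow_one]
  have hg1r₀ : g1 α r₀ = Calpha α / 2 := by
    have e2 : r₀ ^ (α - 1) = (α - 1) ^ (1 - 1/α) := by
      rw [hr₀def, ← Real.rpow_mul ha1.le]
      congr 1
      field_simp
    unfold g1
    rw [e1, e2, Calpha, if_pos ⟨h1, h2⟩]
    have : (1 : ℝ) - (α - 1) = 2 - α := by ring
    rw [this]
    ring
  have hCpos : 0 < Calpha α := by
    have := g1_pos hα hr₀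
    rw [hg1r₀] at this
    linarith
  -- sign of g2
  have hg2pos : ∀ x ∈ Ioo (0:ℝ) r₀, 0 < g2 α x := by
    intro x hx
    have hx01 : x ∈ Ioo (0:ℝ) 1 := ⟨hx.1, hx.2.trans hr₀lt⟩
    have : x ^ α < r₀ ^ α := Real.rpow_lt_rpow hx.1.le hx.2 hα
    rw [e1] at this
    exact mul_pos (AB_pos hα hx01) (by linarith)
  have hg2neg : ∀ x ∈ Ioo r₀ (1:ℝ), g2 α x < 0 := by
    intro x hx
    have hx01 : x ∈ Ioo (0:ℝ) 1 := ⟨hr₀pos.trans hx.1, hx.2⟩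
    have : r₀ ^ α < x ^ α := Real.rpow_lt_rpow hr₀pos.le hx.1 hα
    rw [e1] at this
    exact mul_neg_of_pos_of_neg (AB_pos hα hx01) (by linarith)
  have hmonoL : StrictMonoOn (g1 α) (Ioc 0 r₀) :=
    g1_mono hα (convex_Ioc 0 r₀) (fun x hx => ⟨hx.1, lt_of_le_of_lt hx.2 hr₀lt⟩)
      (fun x hx => hg2pos x (by rwa [interior_Ioc] at hx))
  have hantiR : StrictAntiOn (g1 α) (Ico r₀ 1) :=
    g1_anti hα (convex_Ico r₀ 1) (fun x hx => ⟨hr₀pos.trans_le hx.1, hx.2⟩)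
      (fun x hx => hg2neg x (by rwa [interior_Ico] at hx))
  have g1max : ∀ r ∈ Ioo (0:ℝ) 1, g1 α r ≤ g1 α r₀ := by
    intro r hr
    rcases le_or_gt r r₀ with h | h
    · rcases eq_or_lt_of_le h with rfl | h'
      · exact le_refl _
      · exact (hmonoL ⟨hr.1, h⟩ ⟨hr₀pos, le_refl _⟩ h').le
    · exact (hantiR ⟨le_refl _, hr₀lt⟩ ⟨h.le, hr.2⟩ h).le
  -- g3 at r₀ is negative
  have hg3r₀ : g3 α r₀ < 0 := by
    unfold g3
    rw [e1]
    have hP : 0 < r₀ ^ (α - 3) * (1 - (α-1)) ^ (2/α - 3) :=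
      mul_pos (Real.rpow_pos_of_pos hr₀pos _) (Real.rpow_pos_of_pos (by linarith) _)
    have hB : (α-2) * (1 - (α-1)) * (α-1-(α-1)) + 2*(α-1) * (α-1) * (α-1-(α-1))
        - α * (α-1) * (1-(α-1)) < 0 := by
      have h3 : (0:ℝ) < α * (α-1) * (2 - α) := by
        apply mul_pos (mul_pos hα (by linarith)); linarith
      nlinarith
    exact mul_neg_of_pos_of_neg hP hB
  -- continuity of g3 at r₀
  have hcont : ContinuousAt (g3 α) r₀ := by
    have crα : ContinuousAt (fun r : ℝ => r ^ α) r₀ :=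
      Real.continuousAt_rpow_const _ _ (Or.inl hr₀pos.ne')
    have cu : ContinuousAt (fun r : ℝ => 1 - r ^ α) r₀ := continuousAt_const.sub crα
    have c1 : ContinuousAt (fun r : ℝ => r ^ (α - 3)) r₀ :=
      Real.continuousAt_rpow_const _ _ (Or.inl hr₀pos.ne')
    have c2 : ContinuousAt (fun r : ℝ => (1 - r ^ α) ^ (2/α - 3)) r₀ :=
      cu.rpow_const (Or.inl (by simp only [e1]; intro hc; nlinarith))
    have cb : ContinuousAt (fun r : ℝ => α - 1 - r ^ α) r₀ := continuousAt_const.sub crα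
    exact (c1.mul c2).mul
      ((((continuousAt_const.mul cu).mul cb).add ((continuousAt_const.mul crα).mul cb)).sub
        ((continuousAt_const.mul crα).mul cu))
  have hev : ∀ᶠ r in nhds r₀, g3 α r < g3 α r₀ / 2 ∧ r ∈ Ioo (0:ℝ) 1 := by
    have h1' : ∀ᶠ r in nhds r₀, g3 α r < g3 α r₀ / 2 :=
      hcont (Iio_mem_nhds (by linarith))
    filter_upwards [h1', isOpen_Ioo.mem_nhds hr₀] with r ha hb using ⟨ha, hb⟩
  rw [Metric.eventually_nhds_iff] at hev
  obtain ⟨ε, hε, hball⟩ := hev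
  set r₀' : ℝ := max (r₀/2) (r₀ - ε/2) with hr₀'def
  set r₀'' : ℝ := min ((r₀+1)/2) (r₀ + ε/2) with hr₀''def
  have hr₀'pos : 0 < r₀' := lt_max_of_lt_left (by linarith)
  have hr₀'lt : r₀' < r₀ := max_lt (by linarith) (by linarith)
  have hr₀''gt : r₀ < r₀'' := lt_min (by linarith) (by linarith)
  have hr₀''lt : r₀'' < 1 := min_lt_of_left_lt (by linarith)
  have hIcc : ∀ r ∈ Icc r₀' r₀'', g3 α r < g3 α r₀ / 2 ∧ r ∈ Ioo (0:ℝ) 1 := by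
    intro r hr
    apply hball
    rw [Real.dist_eq, abs_lt]
    constructor
    · have : r₀ - ε/2 ≤ r₀' := le_max_right _ _
      have := hr.1
      linarith
    · have : r₀'' ≤ r₀ + ε/2 := min_le_right _ _
      have := hr.2
      linarith
  -- constants
  set M : ℝ := max (g1 α r₀') (g1 α r₀'') with hMdef
  have hr₀'mem : r₀' ∈ Ioo (0:ℝ) 1 := ⟨hr₀'pos, hr₀'lt.trans hr₀lt⟩
  have hr₀''mem : r₀'' ∈ Ioo (0:ℝ) 1 := ⟨hr₀pos.trans hr₀''gt, hr₀''lt⟩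
  have hM0 : 0 < M := lt_max_of_lt_left (g1_pos hα hr₀'mem)
  have hg1r₀' : g1 α r₀' < g1 α r₀ :=
    hmonoL ⟨hr₀'pos, hr₀'lt.le⟩ ⟨hr₀pos, le_refl _⟩ hr₀'lt
  have hg1r₀'' : g1 α r₀'' < g1 α r₀ :=
    hantiR ⟨le_refl _, hr₀lt⟩ ⟨hr₀''gt.le, hr₀''lt⟩ hr₀''gt
  have hMC : 2 * M < Calpha α := by
    rw [hg1r₀] at hg1r₀' hg1r₀''
    rw [hMdef]
    rcases max_cases (g1 α r₀') (g1 α r₀'') with ⟨h, -⟩ | ⟨h, -⟩ <;> rw [h] <;> linarith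
  set ε₃ : ℝ := -(g3 α r₀) with hε₃def
  have hε₃ : 0 < ε₃ := by simp [hε₃def]; linarith
  set D₁ : ℝ := 1 - 2*M/Calpha α with hD₁def
  have hD₁pos : 0 < D₁ := by
    rw [hD₁def]
    have : 2*M/Calpha α < 1 := (div_lt_one hCpos).2 (by linarith)
    linarith
  set D₂ : ℝ := min 1 (ε₃/Calpha α) with hD₂def
  have hD₂pos : 0 < D₂ := lt_min one_pos (by positivity)
  clear_value r₀ r₀' r₀'' M ε₃ D₁ D₂
  refine ⟨r₀', r₀'', min D₁ D₂, hr₀'pos, hr₀'lt, hr₀''gt, hr₀''lt, lt_min hD₁pos hD₂pos, ?_⟩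
  intro l₁ l₂ hl₂ hl
  have hl₁ : 0 < l₁ := lt_of_lt_of_le (mul_pos hCpos hl₂) hl
  refine ⟨?_, ?_, ?_, ?_⟩
  · intro x hx y hy hxy
    have hx1 : x ∈ Ioo (0:ℝ) 1 := ⟨hx.1, hx.2.trans hr₀lt⟩
    have hy1 : y ∈ Ioo (0:ℝ) 1 := ⟨hy.1, hy.2.trans hr₀lt⟩
    rw [derivP hα hx1, derivP hα hy1]
    have := hmonoL ⟨hx.1, hx.2.le⟩ ⟨hy.1, hy.2.le⟩ hxy
    nlinarith
  · intro x hx y hy hxy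
    have hx1 : x ∈ Ioo (0:ℝ) 1 := ⟨hr₀pos.trans hx.1, hx.2⟩
    have hy1 : y ∈ Ioo (0:ℝ) 1 := ⟨hr₀pos.trans hy.1, hy.2⟩
    rw [derivP hα hx1, derivP hα hy1]
    have := hantiR ⟨hx.1.le, hx.2⟩ ⟨hy.1.le, hy.2⟩ hxy
    nlinarith
  · intro r hr
    have hDD₁ : min D₁ D₂ ≤ D₁ := min_le_left _ _
    have key : ∀ s ∈ Ioo (0:ℝ) 1, g1 α s ≤ M → min D₁ D₂ * l₁ ≤ deriv (phasePlus α l₁ l₂) s := by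
      intro s hs hgs
      rw [derivP hα hs]
      have hgpos := g1_pos hα hs
      have k1 : Calpha α * l₂ * M ≤ l₁ * M := mul_le_mul_of_nonneg_right hl hM0.le
      have k2 : (2*M/Calpha α) * l₁ = 2*M*l₁/Calpha α := by ring
      have k3 : min D₁ D₂ * l₁ ≤ D₁ * l₁ := mul_le_mul_of_nonneg_right hDD₁ hl₁.le
      have k4 : 2 * l₂ * g1 α s ≤ 2 * l₂ * M := by nlinarith
      have k5 : D₁ * l₁ = l₁ - 2*M*l₁/Calpha α := by rw [hD₁def]; ring
      have k6 : 2*M*l₂ ≤ 2*M*l₁/Calpha α := by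
        rw [le_div_iff₀ hCpos]
        nlinarith [mul_le_mul_of_nonneg_left hl (by positivity : (0:ℝ) ≤ 2*M)]
      linarith
    rcases hr with hr | hr
    · have hr1 : r ∈ Ioo (0:ℝ) 1 := ⟨hr.1, hr.2.trans (hr₀'lt.trans hr₀lt)⟩
      have : g1 α r < g1 α r₀' :=
        hmonoL ⟨hr.1, (hr.2.trans hr₀'lt).le⟩ ⟨hr₀'pos, hr₀'lt.le⟩ hr.2
      exact key r hr1 (this.le.trans (by rw [hMdef]; exact le_max_left _ _))
    · have hr1 : r ∈ Ioo (0:ℝ) 1 := ⟨hr₀pos.trans (hr₀''gt.trans hr.1), hr.2⟩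
      have : g1 α r < g1 α r₀'' :=
        hantiR ⟨hr₀''gt.le, hr₀''lt⟩ ⟨(hr₀''gt.trans hr.1).le, hr.2⟩ hr.1
      exact key r hr1 (this.le.trans (by rw [hMdef]; exact le_max_right _ _))
  · have hne : (Icc r₀' r₀'').Nonempty := ⟨r₀, hr₀'lt.le, hr₀''gt.le⟩
    have hS1 : l₁ - Calpha α * l₂ ≤ sInf (deriv (phasePlus α l₁ l₂) '' Icc r₀' r₀'') := by
      apply le_csInf (hne.image _)
      rintro _ ⟨r, hrI, rfl⟩
      obtain ⟨-, hr01⟩ := hIcc r hrI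
      rw [derivP hα hr01]
      have h := g1max r hr01
      rw [hg1r₀] at h
      nlinarith
    have hS2 : ε₃ * l₂ ≤
        sInf ((fun r => |deriv (deriv (deriv (phasePlus α l₁ l₂))) r|) '' Icc r₀' r₀'') := by
      apply le_csInf (hne.image _)
      rintro _ ⟨r, hrI, rfl⟩
      obtain ⟨hg3, hr01⟩ := hIcc r hrI
      simp only
      rw [deriv3P hα hr01]
      have hg3neg : g3 α r < 0 := by
        rw [hε₃def] at hε₃
        linarith
      rw [abs_of_pos (by nlinarith : (0:ℝ) < -(2*l₂) * g3 α r)]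
      nlinarith
    have hDD₂ : min D₁ D₂ ≤ D₂ := min_le_right _ _
    have hD₂1 : D₂ ≤ 1 := by rw [hD₂def]; exact min_le_left _ _
    have hD₂e : D₂ ≤ ε₃/Calpha α := by rw [hD₂def]; exact min_le_right _ _
    have hmul : min D₁ D₂ * l₁ ≤ D₂ * l₁ := mul_le_mul_of_nonneg_right hDD₂ hl₁.le
    rcases le_total (Calpha α) ε₃ with h | h
    · have : D₂ * l₁ ≤ 1 * l₁ := mul_le_mul_of_nonneg_right hD₂1 hl₁.le
      nlinarith
    · have k1 : (Calpha α - ε₃) * l₂ ≤ (Calpha α - ε₃) * (l₁ / Calpha α) := by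
        apply mul_le_mul_of_nonneg_left _ (by linarith)
        rw [le_div_iff₀ hCpos]
        nlinarith
      have k2 : D₂ * l₁ ≤ (ε₃/Calpha α) * l₁ := mul_le_mul_of_nonneg_right hD₂e hl₁.le
      have k3 : (Calpha α - ε₃) * (l₁ / Calpha α) = l₁ - (ε₃/Calpha α)*l₁ := by
        field_simp
      nlinarith

theorem phasePlus_properties (α : ℝ) (hα : 0 < α) :
    (∀ l₁ l₂ : ℝ, 0 < l₂ → Calpha α * l₂ ≤ l₁ → 2 ≤ α →
      StrictAntiOn (deriv (phasePlus α l₁ l₂)) (Ioo 0 1) ∧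
      ∃ rs ∈ Icc (0 : ℝ) 1,
        (∀ r ∈ Ioo 0 rs, l₁ / 2 ≤ deriv (phasePlus α l₁ l₂) r) ∧
        (∀ r ∈ Ioo rs 1, l₁ / 2 ≤ |deriv (deriv (phasePlus α l₁ l₂)) r|)) ∧
    (∀ l₁ l₂ : ℝ, 0 < l₂ → Calpha α * l₂ ≤ l₁ → α ≤ 1 →
      StrictMonoOn (deriv (phasePlus α l₁ l₂)) (Ioo 0 1) ∧
      ∃ rs ∈ Icc (0 : ℝ) 1,
        (∀ r ∈ Ioo rs 1, l₁ / 2 ≤ deriv (phasePlus α l₁ l₂) r) ∧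
        (∀ r ∈ Ioo 0 rs, l₁ / 2 ≤ |deriv (deriv (phasePlus α l₁ l₂)) r|)) ∧
    (1 < α → α < 2 →
      ∃ r₀' r₀'' D : ℝ, 0 < r₀' ∧ r₀' < (α - 1) ^ (1 / α) ∧
        (α - 1) ^ (1 / α) < r₀'' ∧ r₀'' < 1 ∧ 0 < D ∧
        ∀ l₁ l₂ : ℝ, 0 < l₂ → Calpha α * l₂ ≤ l₁ →
          StrictAntiOn (deriv (phasePlus α l₁ l₂)) (Ioo 0 ((α - 1) ^ (1 / α))) ∧
          StrictMonoOn (deriv (phasePlus α l₁ l₂)) (Ioo ((α - 1) ^ (1 / α)) 1) ∧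
          (∀ r ∈ Ioo 0 r₀' ∪ Ioo r₀'' 1, D * l₁ ≤ deriv (phasePlus α l₁ l₂) r) ∧
          D * l₁ ≤ sInf (deriv (phasePlus α l₁ l₂) '' Icc r₀' r₀'') +
            sInf ((fun r => |deriv (deriv (deriv (phasePlus α l₁ l₂))) r|) '' Icc r₀' r₀'')) := by
  exact ⟨fun l₁ l₂ hl₂ hl hα2 => part_i hα hl₂ hα2,
    fun l₁ l₂ hl₂ hl hα1 => part_ii hα hl₂ hα1,
    fun h1 h2 => part_iii h1 h2⟩
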